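/- Let n ≥ 2, 2 ≤ k ≤ n, and write points of ℝ^n as x = (ξ, η) with ξ ∈ ℝ^k and η ∈ ℝ^{n−k}. For λ ≥ 1 and a unit vector ξ̄ ∈ ℝ^k, define w_{λ,ξ̄}(ξ, η) = min(λ‖ξ − ⟨ξ, ξ̄⟩ξ̄‖ − ⟨ξ, ξ̄⟩, 0). If ξ₁, ξ₂ ∈ ℝ^k are unit vectors with ‖ξ₁ − ξ₂‖ ≥ 4/λ, then w_{λ,ξ₁}(x) · w_{λ,ξ₂}(x) = 0 for every x ∈ S^{n−1}. -/

import Mathlib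

set_option maxHeartbeats 1000000


open scoped InnerProductSpace

noncomputable section

/-- Euclidean space `ℝ^n`. -/
abbrev Eucl (n : ℕ) : Type := EuclideanSpace ℝ (Fin n)

/-- The projection of `ℝ^n = ℝ^k × ℝ^{n-k}` onto the first factor `ℝ^k`
(in coordinates): `x = (ξ, η) ↦ ξ`. -/
def euclProj {n k : ℕ} (hkn : k ≤ n) (x : Eucl n) : Eucl k :=
  WithLp.toLp 2 (fun i => x (Fin.castLE hkn i))

/-- The function `w_{λ,ξ̄}(ξ, η) = min(λ‖ξ - ⟨ξ, ξ̄⟩ξ̄‖ - ⟨ξ, ξ̄⟩, 0)` on `ℝ^n`. -/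
def wfun {n k : ℕ} (hkn : k ≤ n) (lam : ℝ) (ξb : Eucl k) (x : Eucl n) : ℝ :=
  min (lam * ‖euclProj hkn x - ⟪euclProj hkn x, ξb⟫_ℝ • ξb‖ - ⟪euclProj hkn x, ξb⟫_ℝ) 0

/-- If `ξ₁, ξ₂` are unit vectors of `ℝ^k` with `‖ξ₁ - ξ₂‖ ≥ 4/λ` (`λ ≥ 1`), then
the functions `w_{λ,ξ₁}` and `w_{λ,ξ₂}` have pointwise product zero on the unit
sphere of `ℝ^n`. -/
theorem distant_points_give_orthogonal_w (n k : ℕ) (hn : 2 ≤ n) (hk : 2 ≤ k)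
    (hkn : k ≤ n) (lam : ℝ) (hlam : 1 ≤ lam)
    (ξ₁ ξ₂ : Eucl k) (h₁ : ‖ξ₁‖ = 1) (h₂ : ‖ξ₂‖ = 1)
    (hsep : 4 / lam ≤ ‖ξ₁ - ξ₂‖) :
    ∀ x : Eucl n, ‖x‖ = 1 → wfun hkn lam ξ₁ x * wfun hkn lam ξ₂ x = 0 := by
  intro x hx
  rcases eq_or_ne (wfun hkn lam ξ₁ x) 0 with h | h
  · rw [h, zero_mul]
  rcases eq_or_ne (wfun hkn lam ξ₂ x) 0 with h' | h'
  · rw [h', mul_zero]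
  exfalso
  set ξ : Eucl k := euclProj hkn x with hξ
  set t₁ : ℝ := ⟪ξ, ξ₁⟫_ℝ with ht₁
  set t₂ : ℝ := ⟪ξ, ξ₂⟫_ℝ with ht₂
  set a₁ : ℝ := ‖ξ - t₁ • ξ₁‖ with ha₁
  set a₂ : ℝ := ‖ξ - t₂ • ξ₂‖ with ha₂
  have hlt1 : lam * a₁ < t₁ := by
    by_contra hc
    push_neg at hc
    exact h (min_eq_right (by linarith))
  have hlt2 : lam * a₂ < t₂ := by
    by_contra hc
    push_neg at hc
    exact h' (min_eq_right (by linarith))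
  have hlam0 : (0:ℝ) < lam := by linarith
  have ha1n : (0:ℝ) ≤ a₁ := norm_nonneg _
  have ha2n : (0:ℝ) ≤ a₂ := norm_nonneg _
  have ht1pos : 0 < t₁ := lt_of_le_of_lt (by positivity) hlt1
  have ht2pos : 0 < t₂ := lt_of_le_of_lt (by positivity) hlt2
  set r2 : ℝ := ‖ξ‖ ^ 2 with hr2
  have hp1 : a₁ ^ 2 = r2 - t₁ ^ 2 := by
    rw [ha₁, norm_sub_sq_real, real_inner_smul_right, norm_smul, h₁, Real.norm_eq_abs,
      ← ht₁, hr2]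
    ring_nf; rw [sq_abs]; ring
  have hp2 : a₂ ^ 2 = r2 - t₂ ^ 2 := by
    rw [ha₂, norm_sub_sq_real, real_inner_smul_right, norm_smul, h₂, Real.norm_eq_abs,
      ← ht₂, hr2]
    ring_nf; rw [sq_abs]; ring
  set c : ℝ := ⟪ξ₁, ξ₂⟫_ℝ with hc
  set s : ℝ := ‖ξ₁ - ξ₂‖ with hs
  have hsc : s ^ 2 = 2 - 2 * c := by
    rw [hs, norm_sub_sq_real, h₁, h₂, ← hc]; ring
  set d : ℝ := ‖t₁ • ξ₁ - t₂ • ξ₂‖ with hd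
  have hdc : d ^ 2 = t₁ ^ 2 + t₂ ^ 2 - 2 * (t₁ * t₂ * c) := by
    rw [hd, norm_sub_sq_real, real_inner_smul_left, real_inner_smul_right,
      norm_smul, norm_smul, h₁, h₂, Real.norm_eq_abs, Real.norm_eq_abs, ← hc]
    ring_nf; rw [sq_abs, sq_abs]; ring
  have hdle : d ≤ a₁ + a₂ := by
    have heq : t₁ • ξ₁ - t₂ • ξ₂ = (ξ - t₂ • ξ₂) - (ξ - t₁ • ξ₁) := by abel
    calc d = ‖(ξ - t₂ • ξ₂) - (ξ - t₁ • ξ₁)‖ := by rw [hd, heq]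
    _ ≤ a₂ + a₁ := norm_sub_le _ _
    _ = a₁ + a₂ := by ring
  have hCS1 : t₁ ^ 2 ≤ r2 := by nlinarith [hp1, sq_nonneg a₁]
  have hCS2 : t₂ ^ 2 ≤ r2 := by nlinarith [hp2, sq_nonneg a₂]
  have hs4 : 4 ≤ lam * s := by
    rw [div_le_iff₀ hlam0] at hsep; linarith
  have hs0 : (0:ℝ) ≤ s := norm_nonneg _
  have hd0 : (0:ℝ) ≤ d := norm_nonneg _
  -- squared versions
  have hsq1 : lam ^ 2 * (r2 - t₁ ^ 2) < t₁ ^ 2 := by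
    have h' : (lam * a₁) * (lam * a₁) < t₁ * t₁ :=
      mul_self_lt_mul_self (by positivity) hlt1
    nlinarith [hp1]
  have hsq2 : lam ^ 2 * (r2 - t₂ ^ 2) < t₂ ^ 2 := by
    have h' : (lam * a₂) * (lam * a₂) < t₂ * t₂ :=
      mul_self_lt_mul_self (by positivity) hlt2
    nlinarith [hp2]
  have hl2 : (0:ℝ) ≤ lam ^ 2 - 1 := by nlinarith
  have h2t1 : r2 < 2 * t₁ ^ 2 := by
    by_contra hcon
    push_neg at hcon
    have h3 : lam ^ 2 * (2 * t₁ ^ 2) ≤ lam ^ 2 * r2 :=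
      mul_le_mul_of_nonneg_left hcon (sq_nonneg lam)
    have h4 : 0 ≤ (lam ^ 2 - 1) * t₁ ^ 2 := mul_nonneg hl2 (sq_nonneg t₁)
    nlinarith [hsq1]
  have h2t2 : r2 < 2 * t₂ ^ 2 := by
    by_contra hcon
    push_neg at hcon
    have h3 : lam ^ 2 * (2 * t₂ ^ 2) ≤ lam ^ 2 * r2 :=
      mul_le_mul_of_nonneg_left hcon (sq_nonneg lam)
    have h4 : 0 ≤ (lam ^ 2 - 1) * t₂ ^ 2 := mul_nonneg hl2 (sq_nonneg t₂)
    nlinarith [hsq2]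
  -- r2 < 2 t₁ t₂
  have hrT : r2 < 2 * (t₁ * t₂) := by
    have hr2nn : (0:ℝ) ≤ r2 := sq_nonneg _
    nlinarith [mul_pos ht1pos ht2pos, mul_lt_mul'' h2t1 h2t2 hr2nn hr2nn]
  -- t₁ t₂ s² ≤ d²
  have hkey : t₁ * t₂ * s ^ 2 ≤ d ^ 2 := by
    have heq : d ^ 2 - t₁ * t₂ * s ^ 2 = (t₁ - t₂) ^ 2 := by rw [hdc, hsc]; ring
    linarith [sq_nonneg (t₁ - t₂)]
  -- (lam d)² < (t₁+t₂)²
  have hld : lam * d < t₁ + t₂ := by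
    have h5 := mul_le_mul_of_nonneg_left hdle hlam0.le
    have h6 : lam * (a₁ + a₂) = lam * a₁ + lam * a₂ := by ring
    linarith
  have hld2 : (lam * d) ^ 2 < (t₁ + t₂) ^ 2 := by
    have h5 := mul_self_lt_mul_self (by positivity) hld
    have h6 : (lam * d) * (lam * d) = (lam * d) ^ 2 := by ring
    have h7 : (t₁ + t₂) * (t₁ + t₂) = (t₁ + t₂) ^ 2 := by ring
    linarith
  -- (t₁+t₂)² ≤ 4 r2
  have htr : (t₁ + t₂) ^ 2 ≤ 4 * r2 := by
    have h5 := sq_nonneg (t₁ - t₂)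
    have h6 : (t₁ + t₂) ^ 2 + (t₁ - t₂) ^ 2 = 2 * t₁ ^ 2 + 2 * t₂ ^ 2 := by ring
    linarith
  -- 16 ≤ lam² s²
  have hls : 16 ≤ (lam * s) ^ 2 := by
    have h5 := mul_self_le_mul_self (by norm_num : (0:ℝ) ≤ 4) hs4
    have h6 : (lam * s) * (lam * s) = (lam * s) ^ 2 := by ring
    linarith
  -- combine
  have hA : 16 * (t₁ * t₂) ≤ lam ^ 2 * (t₁ * t₂ * s ^ 2) := by
    have h5 := mul_le_mul_of_nonneg_right hls (mul_pos ht1pos ht2pos).le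
    have h6 : (lam * s) ^ 2 * (t₁ * t₂) = lam ^ 2 * (t₁ * t₂ * s ^ 2) := by ring
    linarith
  have hB : lam ^ 2 * (t₁ * t₂ * s ^ 2) ≤ (lam * d) ^ 2 := by
    have h5 := mul_le_mul_of_nonneg_left hkey (sq_nonneg lam)
    have h6 : lam ^ 2 * d ^ 2 = (lam * d) ^ 2 := by ring
    linarith
  have hT : 0 < t₁ * t₂ := mul_pos ht1pos ht2pos
  linarith
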